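/- Let f be an (n,N,M) F-sequence with M < N−2 and suppose f_{N−1,M+1} = f_{N−1,N−1}. Then L_f(N,M+1) = f_{N−1,N−1} − 1 ≤ U_f(N,M+1), and extending f by setting f_{N,M+1} = f_{N−1,N−1} − 1 yields an (n,N,M+1) F-sequence. -/
import Mathlib


/-- The lower bound `L_f(i,j)` used in the F-sequence constraints. -/
def Lb (f : ℤ → ℤ → ℤ) (i j : ℤ) : ℤ :=
  max (f i (j - 1)) (max (f (i - 1) j - 1)
    (f i (j - 1) + f (i - 1) j - f (i - 1) (j - 1) - 1))

/-- The upper bound `U_f(i,j)` used in the F-sequence constraints. -/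
def Ub (f : ℤ → ℤ → ℤ) (i j : ℤ) : ℤ :=
  min (f (i - 1) j) (f i (j - 1) + f (i - 1) j - f (i - 1) (j - 1))

/-- The index domain of an `(n,N,M)` F-sequence:
`{(i,j) : 0 ≤ j ≤ i ≤ N-1} ∪ {(N,j) : 0 ≤ j ≤ M}`. -/
def ValidIdx (N M i j : ℤ) : Prop :=
  (0 ≤ j ∧ j ≤ i ∧ i ≤ N - 1) ∨ (i = N ∧ 0 ≤ j ∧ j ≤ M)

/-- An `(n,N,M)` **F**-sequence: a partially filled F-matrix, filled on the domain
`{(i,j) : 0 ≤ j ≤ i ≤ N-1} ∪ {(N,j) : 0 ≤ j ≤ M}` (and zero elsewhere). -/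
structure IsFSeq (n N M : ℕ) (f : ℤ → ℤ → ℤ) : Prop where
  hMN : M ≤ N
  hN2n : (N : ℤ) ≤ 2 * (n : ℤ) - 3
  zero_outside : ∀ i j : ℤ, ¬ ValidIdx (N : ℤ) (M : ℤ) i j → f i j = 0
  nonneg : ∀ i j : ℤ, 0 ≤ f i j
  diag_pos : ∀ i : ℤ, 0 ≤ i → i ≤ max ((N : ℤ) - 1) (M : ℤ) → 0 < f i i
  diag_first : f 0 0 = 2
  diag_step : ∀ i : ℤ, 1 ≤ i → i ≤ max ((N : ℤ) - 1) (M : ℤ) →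
      f i i = f (i - 1) (i - 1) + 1 ∨ f i i = f (i - 1) (i - 1) - 1
  diag_bound : ∀ i : ℤ, 0 ≤ i → i ≤ max ((N : ℤ) - 1) (M : ℤ) →
      f i i ≤ 2 * (n : ℤ) - i - 2
  bounds : ∀ i j : ℤ, ValidIdx (N : ℤ) (M : ℤ) i j → 0 ≤ j → j ≤ i - 2 →
      Lb f i j ≤ f i j ∧ f i j ≤ Ub f i j
  special : ∀ i j : ℤ, ValidIdx (N : ℤ) (M : ℤ) i j → 0 ≤ j → j ≤ i - 1 →
      f (i - 1) j = f (i - 1) (i - 1) → f i j = f (i - 1) (i - 1) - 1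

/-- extending an `(n,N,M)` F-sequence (with `M < N-2` and
`f_{N-1,M+1} = f_{N-1,N-1}`) at `(N,M+1)` by `f_{N-1,N-1} - 1` yields an
`(n,N,M+1)` F-sequence; moreover this value equals `L_f(N,M+1)` and is at most
`U_f(N,M+1)`. -/
theorem fseq_extend_row_special (n N M : ℕ) (f : ℤ → ℤ → ℤ)
    (hf : IsFSeq n N M f) (h : (M : ℤ) < (N : ℤ) - 2)
    (heq : f ((N : ℤ) - 1) ((M : ℤ) + 1) = f ((N : ℤ) - 1) ((N : ℤ) - 1)) :
    Lb f (N : ℤ) ((M : ℤ) + 1) = f ((N : ℤ) - 1) ((N : ℤ) - 1) - 1 ∧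
    f ((N : ℤ) - 1) ((N : ℤ) - 1) - 1 ≤ Ub f (N : ℤ) ((M : ℤ) + 1) ∧
    IsFSeq n N (M + 1)
      (fun i j => if i = (N : ℤ) ∧ j = (M : ℤ) + 1 then
        f ((N : ℤ) - 1) ((N : ℤ) - 1) - 1 else f i j) := by

  obtain ⟨hMN, hN2n, hzero, hnn, hdpos, hdfirst, hdstep, hdbound, hbounds, hspec⟩ := hf
  have hM0 : (0:ℤ) ≤ (M:ℤ) := Int.natCast_nonneg M
  have hN3 : (3:ℤ) ≤ (N:ℤ) := by omega
  have eM : (M:ℤ) + 1 - 1 = (M:ℤ) := by ring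
  have hvNM : ValidIdx (N:ℤ) (M:ℤ) (N:ℤ) (M:ℤ) := Or.inr ⟨rfl, hM0, le_refl _⟩
  have hbNM := hbounds (N:ℤ) (M:ℤ) hvNM hM0 (by omega)
  simp only [Lb, Ub] at hbNM
  have hA : f (N:ℤ) (M:ℤ) ≤ f ((N:ℤ)-1) (M:ℤ) := by omega
  have hA' : f ((N:ℤ)-1) (M:ℤ) - 1 ≤ f (N:ℤ) (M:ℤ) := by omega
  have hB : f ((N:ℤ)-1) (M:ℤ) ≤ f ((N:ℤ)-1) ((N:ℤ)-1) := by
    by_cases hc : (M:ℤ) + 4 ≤ (N:ℤ)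
    · have hv : ValidIdx (N:ℤ) (M:ℤ) ((N:ℤ)-1) ((M:ℤ)+1) :=
        Or.inl ⟨by omega, by omega, by omega⟩
      have hb := (hbounds _ _ hv (by omega) (by omega)).1
      simp only [Lb] at hb
      rw [eM] at hb
      omega
    · have hM3 : (M:ℤ) = (N:ℤ) - 3 := by omega
      have e1 : (N:ℤ) - 2 - 1 = (N:ℤ) - 3 := by ring
      have e2 : (N:ℤ) - 1 - 1 = (N:ℤ) - 2 := by ring
      have e3 : (N:ℤ) - 3 + 1 = (N:ℤ) - 2 := by ring
      have heq2 := heq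
      rw [hM3, e3] at heq2
      have s1 : f ((N:ℤ)-2) ((N:ℤ)-3) = f ((N:ℤ)-3) ((N:ℤ)-3) - 1 := by
        have := hspec ((N:ℤ)-2) ((N:ℤ)-3) (Or.inl ⟨by omega, by omega, by omega⟩)
          (by omega) (by omega) (by rw [e1])
        rwa [e1] at this
      have s2 : f ((N:ℤ)-1) ((N:ℤ)-2) = f ((N:ℤ)-2) ((N:ℤ)-2) - 1 := by
        have := hspec ((N:ℤ)-1) ((N:ℤ)-2) (Or.inl ⟨by omega, by omega, by omega⟩)
          (by omega) (by omega) (by rw [e2])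
        rwa [e2] at this
      have hstep := hdstep ((N:ℤ)-2) (by omega) (by omega)
      rw [e1] at hstep
      have hb3 := (hbounds ((N:ℤ)-1) ((N:ℤ)-3) (Or.inl ⟨by omega, by omega, by omega⟩)
        (by omega) (by omega)).2
      simp only [Ub] at hb3
      rw [e2] at hb3
      rcases hstep with hs | hs
      · rw [hM3]; omega
      · have s3 : f ((N:ℤ)-1) ((N:ℤ)-3) = f ((N:ℤ)-2) ((N:ℤ)-2) - 1 := by
          have := hspec ((N:ℤ)-1) ((N:ℤ)-3) (Or.inl ⟨by omega, by omega, by omega⟩)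
            (by omega) (by omega) (by rw [e2]; omega)
          rwa [e2] at this
        rw [hM3]; omega
  have hC : f (N:ℤ) (M:ℤ) ≤ f ((N:ℤ)-1) ((N:ℤ)-1) - 1 := by
    by_cases he : f ((N:ℤ)-1) (M:ℤ) = f ((N:ℤ)-1) ((N:ℤ)-1)
    · have := hspec (N:ℤ) (M:ℤ) hvNM hM0 (by omega) he
      omega
    · omega
  refine ⟨?_, ?_, ?_⟩
  · simp only [Lb]
    rw [eM, heq]
    omega
  · simp only [Ub]
    rw [eM, heq]
    omega
  · constructor
    · omega
    · exact hN2n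
    · intro i j hnv
      have hne : ¬(i = (N:ℤ) ∧ j = (M:ℤ) + 1) := by
        rintro ⟨rfl, rfl⟩
        exact hnv (Or.inr ⟨rfl, by omega, by push_cast; omega⟩)
      simp only [if_neg hne]
      apply hzero
      intro hv
      apply hnv
      rcases hv with ⟨h1, h2, h3⟩ | ⟨h1, h2, h3⟩
      · exact Or.inl ⟨h1, h2, h3⟩
      · exact Or.inr ⟨h1, h2, by push_cast; omega⟩
    · intro i j
      by_cases hc : i = (N:ℤ) ∧ j = (M:ℤ) + 1
      · simp only [if_pos hc]
        have := hdpos ((N:ℤ)-1) (by omega) (by omega)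
        omega
      · simp only [if_neg hc]
        exact hnn i j
    · intro i h0 hle
      have hne : ¬(i = (N:ℤ) ∧ i = (M:ℤ) + 1) := by omega
      simp only [if_neg hne]
      exact hdpos i h0 (by omega)
    · have hne : ¬((0:ℤ) = (N:ℤ) ∧ (0:ℤ) = (M:ℤ) + 1) := by omega
      simp only [if_neg hne]
      exact hdfirst
    · intro i h1 hle
      have hn1 : ¬(i = (N:ℤ) ∧ i = (M:ℤ) + 1) := by omega
      have hn2 : ¬(i - 1 = (N:ℤ) ∧ i - 1 = (M:ℤ) + 1) := by omega
      simp only [if_neg hn1, if_neg hn2]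
      exact hdstep i h1 (by omega)
    · intro i h0 hle
      have hn1 : ¬(i = (N:ℤ) ∧ i = (M:ℤ) + 1) := by omega
      simp only [if_neg hn1]
      exact hdbound i h0 (by omega)
    · intro i j hv h0 h2
      by_cases hc : i = (N:ℤ) ∧ j = (M:ℤ) + 1
      · obtain ⟨rfl, rfl⟩ := hc
        have nN : (N:ℤ) - 1 ≠ (N:ℤ) := by omega
        have nM2 : (M:ℤ) ≠ (M:ℤ) + 1 := by omega
        simp only [Lb, Ub, eM, nN, nM2, false_and, and_false, if_false,
          eq_self_iff_true, and_self, if_true, ite_true, ite_false, true_and, and_true]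
        rw [heq]
        omega
      · have hvx := hv
        simp only [ValidIdx] at hvx
        have hv' : ValidIdx (N:ℤ) (M:ℤ) i j := by
          simp only [ValidIdx]; omega
        have hb := hbounds i j hv' h0 h2
        have n1 : ¬(i = (N:ℤ) ∧ j - 1 = (M:ℤ) + 1) := by omega
        have n2 : ¬(i - 1 = (N:ℤ) ∧ j = (M:ℤ) + 1) := by omega
        have n3 : ¬(i - 1 = (N:ℤ) ∧ j - 1 = (M:ℤ) + 1) := by omega
        simp only [Lb, Ub] at hb
        simp only [Lb, Ub, if_neg hc, if_neg n1, if_neg n2, if_neg n3]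
        exact hb
    · intro i j hv h0 h1 hyp
      by_cases hc : i = (N:ℤ) ∧ j = (M:ℤ) + 1
      · obtain ⟨rfl, rfl⟩ := hc
        have n4 : ¬((N:ℤ) - 1 = (N:ℤ) ∧ (N:ℤ) - 1 = (M:ℤ) + 1) := by omega
        simp only [if_neg n4]
        simp
      · have hvx := hv
        simp only [ValidIdx] at hvx
        have hv' : ValidIdx (N:ℤ) (M:ℤ) i j := by
          simp only [ValidIdx]; omega
        have n2 : ¬(i - 1 = (N:ℤ) ∧ j = (M:ℤ) + 1) := by omega
        have n4 : ¬(i - 1 = (N:ℤ) ∧ i - 1 = (M:ℤ) + 1) := by omega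
        simp only [if_neg hc, if_neg n2, if_neg n4] at hyp ⊢
        exact hspec i j hv' h0 h1 hyp
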